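/- Let V be a fixed finite vertex set. The renormalized resistance distance RD is a metric on the set of simple graphs with vertex set V: for all simple graphs G¹, G², G³ on V one has RD(G¹,G²) ≥ 0 with RD(G¹,G²) = 0 if and only if G¹ = G², RD(G¹,G²) = RD(G²,G¹), and RD(G¹,G³) ≤ RD(G¹,G²) + RD(G²,G³). -/

import Mathlib

open scoped Classical BigOperators ENNReal
open Filter MeasureTheory Topology Asymptotics ProbabilityTheory

noncomputable section

namespace RP

variable {V : Type*} [Fintype V]

/-- A unit flow from `u` to `v` on the graph `G`. -/
def IsUnitFlow (G : SimpleGraph V) (u v : V) (f : V → V → ℝ) : Prop :=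
  (∀ a b, f a b = - f b a) ∧
  (∀ a b, ¬ G.Adj a b → f a b = 0) ∧
  (∀ w, ∑ x, f w x = (if w = u then (1:ℝ) else 0) - (if w = v then (1:ℝ) else 0))

/-- Energy of a flow (each undirected edge counted once). -/
def energy (f : V → V → ℝ) : ℝ := (1/2) * ∑ a, ∑ b, (f a b)^2

/-- Effective resistance as infimum of energies of unit flows, `∞` if disconnected. -/
def effRes (G : SimpleGraph V) (u v : V) : ℝ≥0∞ :=
  sInf {x : ℝ≥0∞ | ∃ f, IsUnitFlow G u v f ∧ x = ENNReal.ofReal (energy f)}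

/-- Renormalized effective resistance `R̂/(R̂+1)`, equal to 1 when disconnected. -/
def renRes (G : SimpleGraph V) (u v : V) : ℝ :=
  if effRes G u v = ⊤ then 1
  else (effRes G u v).toReal / ((effRes G u v).toReal + 1)

/-- Renormalized resistance distance, summed over pairs `u < v` in `S`. -/
def RDon [LinearOrder V] (S : Finset V) (G₁ G₂ : SimpleGraph V) : ℝ :=
  ∑ p ∈ (S ×ˢ S).filter (fun p => p.1 < p.2),
    |renRes G₁ p.1 p.2 - renRes G₂ p.1 p.2|

/-- Renormalized resistance distance on a full common vertex set. -/
def RD [LinearOrder V] (G₁ G₂ : SimpleGraph V) : ℝ := RDon Finset.univ G₁ G₂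


/-- the "delta" function δu - δv -/
def dlt (u v : V) : V → ℝ := fun w => (if w = u then (1:ℝ) else 0) - (if w = v then (1:ℝ) else 0)

variable [DecidableEq V]

lemma lapL_apply (G : SimpleGraph V) [DecidableRel G.Adj] (x : V → ℝ) (a : V) :
    Matrix.toLin' (G.lapMatrix ℝ) x a = ∑ b, if G.Adj a b then x a - x b else 0 := by
  rw [Matrix.toLin'_apply, SimpleGraph.lapMatrix_mulVec_apply]
  rw [SimpleGraph.degree_eq_sum_if_adj]
  rw [Finset.sum_mul]
  have : ∑ u ∈ G.neighborFinset a, x u = ∑ b, if G.Adj a b then x b else 0 := by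
    classical
    rw [show G.neighborFinset a = Finset.univ.filter (fun b => G.Adj a b) by
      ext b; simp [SimpleGraph.mem_neighborFinset], Finset.sum_filter]
  rw [this, ← Finset.sum_sub_distrib]
  congr 1; ext b
  by_cases h : G.Adj a b <;> simp [h]

/-- the flow induced by a potential -/
def stdFlow (G : SimpleGraph V) [DecidableRel G.Adj] (φ : V → ℝ) : V → V → ℝ :=
  fun a b => if G.Adj a b then φ a - φ b else 0

lemma stdFlow_div (G : SimpleGraph V) [DecidableRel G.Adj] (φ : V → ℝ) (a : V) :
    ∑ b, stdFlow G φ a b = Matrix.toLin' (G.lapMatrix ℝ) φ a := by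
  rw [lapL_apply]; rfl

lemma stdFlow_isUnitFlow (G : SimpleGraph V) [DecidableRel G.Adj] {φ : V → ℝ} {u v : V}
    (h : Matrix.toLin' (G.lapMatrix ℝ) φ = dlt u v) :
    IsUnitFlow G u v (stdFlow G φ) := by
  refine ⟨fun a b => ?_, fun a b hab => ?_, fun w => ?_⟩
  · unfold stdFlow
    by_cases h' : G.Adj a b
    · rw [if_pos h', if_pos h'.symm]; ring
    · rw [if_neg h', if_neg (fun hc => h' hc.symm)]; ring
  · simp [stdFlow, hab]
  · rw [stdFlow_div, h]; rfl

lemma energy_nonneg (f : V → V → ℝ) : 0 ≤ energy f := by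
  unfold energy
  have : (0:ℝ) ≤ ∑ a, ∑ b, (f a b)^2 :=
    Finset.sum_nonneg fun a _ => Finset.sum_nonneg fun b _ => sq_nonneg _
  linarith

lemma energy_stdFlow (G : SimpleGraph V) [DecidableRel G.Adj] (φ : V → ℝ) :
    energy (stdFlow G φ) = ∑ a, φ a * Matrix.toLin' (G.lapMatrix ℝ) φ a := by
  have key : ∀ a b, φ a * stdFlow G φ a b + φ b * stdFlow G φ b a = (stdFlow G φ a b)^2 := by
    intro a b
    unfold stdFlow
    by_cases h : G.Adj a b
    · rw [if_pos h, if_pos h.symm]; ring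
    · rw [if_neg h, if_neg fun hc => h hc.symm]; ring
  have h1 : ∑ a, φ a * Matrix.toLin' (G.lapMatrix ℝ) φ a = ∑ a, ∑ b, φ a * stdFlow G φ a b := by
    congr 1; ext a; rw [← stdFlow_div, Finset.mul_sum]
  rw [h1]
  have h2 : ∑ a, ∑ b, φ a * stdFlow G φ a b = ∑ a, ∑ b, φ b * stdFlow G φ b a := by
    rw [Finset.sum_comm]
  have h3 : (2:ℝ) * ∑ a, ∑ b, φ a * stdFlow G φ a b = ∑ a, ∑ b, (stdFlow G φ a b)^2 := by
    rw [two_mul]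
    nth_rewrite 2 [h2]
    rw [← Finset.sum_add_distrib]
    simp_rw [← Finset.sum_add_distrib, key]
  unfold energy
  linarith


lemma cross_zero (G : SimpleGraph V) [DecidableRel G.Adj] (g : V → V → ℝ) (φ : V → ℝ)
    (hanti : ∀ a b, g a b = - g b a)
    (hsupp : ∀ a b, ¬ G.Adj a b → g a b = 0)
    (hdiv : ∀ a, ∑ b, g a b = 0) :
    ∑ a, ∑ b, g a b * stdFlow G φ a b = 0 := by
  have h0 : ∀ a b, g a b * stdFlow G φ a b = g a b * φ a - g a b * φ b := by
    intro a b
    unfold stdFlow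
    by_cases h : G.Adj a b
    · rw [if_pos h]; ring
    · rw [if_neg h, hsupp a b h]; ring
  simp_rw [h0, Finset.sum_sub_distrib]
  have h1 : ∑ a, ∑ b, g a b * φ b = - ∑ a, ∑ b, g a b * φ a := by
    rw [Finset.sum_comm, ← Finset.sum_neg_distrib]
    congr 1; ext b
    rw [← Finset.sum_neg_distrib]
    congr 1; ext a
    rw [hanti a b]; ring
  rw [h1]
  have h2 : ∀ a, ∑ b, g a b * φ a = 0 := by
    intro a; rw [← Finset.sum_mul, hdiv]; ring
  simp_rw [h2]
  simp

lemma energy_ge (G : SimpleGraph V) [DecidableRel G.Adj] {φ : V → ℝ} {u v : V}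
    (hφ : Matrix.toLin' (G.lapMatrix ℝ) φ = dlt u v)
    {f : V → V → ℝ} (hf : IsUnitFlow G u v f) :
    energy (stdFlow G φ) ≤ energy f := by
  obtain ⟨hanti, hsupp, hdiv⟩ := hf
  obtain ⟨santi, ssupp, sdiv⟩ := stdFlow_isUnitFlow G hφ
  set g : V → V → ℝ := fun a b => f a b - stdFlow G φ a b with hg
  have hganti : ∀ a b, g a b = - g b a := by
    intro a b; simp only [hg]; rw [hanti a b, santi a b]; ring
  have hgsupp : ∀ a b, ¬ G.Adj a b → g a b = 0 := by
    intro a b h; simp only [hg]; rw [hsupp a b h, ssupp a b h]; ring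
  have hgdiv : ∀ a, ∑ b, g a b = 0 := by
    intro a
    simp only [hg]
    rw [Finset.sum_sub_distrib, hdiv, sdiv]
    ring
  have hcross := cross_zero G g φ hganti hgsupp hgdiv
  have expand : energy f = energy g + energy (stdFlow G φ) + ∑ a, ∑ b, g a b * stdFlow G φ a b := by
    unfold energy
    have : ∀ a b, (f a b)^2 = (g a b)^2 + (stdFlow G φ a b)^2 + 2 * (g a b * stdFlow G φ a b) := by
      intro a b
      have : f a b = g a b + stdFlow G φ a b := by simp [hg]
      rw [this]; ring
    simp_rw [this, Finset.sum_add_distrib, ← Finset.mul_sum]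
    ring
  have := energy_nonneg g
  rw [expand, hcross]
  linarith

lemma effRes_eq_of_pot (G : SimpleGraph V) [DecidableRel G.Adj] {φ : V → ℝ} {u v : V}
    (hφ : Matrix.toLin' (G.lapMatrix ℝ) φ = dlt u v) :
    effRes G u v = ENNReal.ofReal (φ u - φ v) := by
  have hval : energy (stdFlow G φ) = φ u - φ v := by
    rw [energy_stdFlow]
    have h1 : ∀ a, φ a * Matrix.toLin' (G.lapMatrix ℝ) φ a =
        (if a = u then φ a else 0) - (if a = v then φ a else 0) := by
      intro a
      rw [hφ]
      unfold dlt
      split_ifs <;> ring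
    rw [Finset.sum_congr rfl (fun a _ => h1 a), Finset.sum_sub_distrib]
    simp
  apply le_antisymm
  · apply sInf_le
    exact ⟨stdFlow G φ, stdFlow_isUnitFlow G hφ, by rw [hval]⟩
  · apply le_sInf
    rintro x ⟨f, hf, rfl⟩
    rw [← hval]
    exact ENNReal.ofReal_le_ofReal (energy_ge G hφ hf)


lemma _root_.SimpleGraph.lapMatrix_toLin'_apply_eq_zero_iff_forall_reachable (G : SimpleGraph V)
    [DecidableRel G.Adj] (x : V → ℝ) :
    Matrix.toLin' (G.lapMatrix ℝ) x = 0 ↔ ∀ i j, G.Reachable i j → x i = x j := by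
  rw [Matrix.toLin'_apply]; exact SimpleGraph.lapMatrix_mulVec_eq_zero_iff_forall_reachable G

section LinAlg

variable (G : SimpleGraph V) [DecidableRel G.Adj]

/-- The Laplacian as an operator on Euclidean space. -/
def TT : EuclideanSpace ℝ V →ₗ[ℝ] EuclideanSpace ℝ V :=
  Matrix.toEuclideanLin (G.lapMatrix ℝ)

lemma TT_apply (x : EuclideanSpace ℝ V) :
    TT G x = Matrix.toLin' (G.lapMatrix ℝ) x := rfl

lemma TT_symm : (TT G).IsSymmetric :=
  (Matrix.isHermitian_iff_isSymmetric).1 (SimpleGraph.posSemidef_lapMatrix ℝ G).1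

lemma mem_ker_TT (x : EuclideanSpace ℝ V) :
    x ∈ LinearMap.ker (TT G) ↔ ∀ i j, G.Reachable i j → x i = x j := by
  rw [LinearMap.mem_ker]
  constructor
  · intro h
    rw [← SimpleGraph.lapMatrix_toLin'_apply_eq_zero_iff_forall_reachable G x, ← TT_apply]
    rw [h]; rfl
  · intro h
    have := (SimpleGraph.lapMatrix_toLin'_apply_eq_zero_iff_forall_reachable G x).2 h
    exact congrArg (WithLp.toLp 2) this

lemma range_TT : LinearMap.range (TT G) = (LinearMap.ker (TT G))ᗮ := by
  have hle : LinearMap.range (TT G) ≤ (LinearMap.ker (TT G))ᗮ := by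
    rintro y ⟨x, rfl⟩
    rw [Submodule.mem_orthogonal]
    intro z hz
    rw [LinearMap.mem_ker] at hz
    rw [real_inner_comm, TT_symm G x z, hz, inner_zero_right]
  apply Submodule.eq_of_le_of_finrank_eq hle
  have h1 := Submodule.finrank_add_finrank_orthogonal (LinearMap.ker (TT G))
  have h2 := LinearMap.finrank_range_add_finrank_ker (TT G)
  omega

end LinAlg

/-- `dlt` as an element of Euclidean space -/
def dltE (u v : V) : EuclideanSpace ℝ V := (WithLp.equiv 2 (V → ℝ)).symm (dlt u v)

@[simp] lemma dltE_apply (u v a : V) : dltE u v a = dlt u v a := rfl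

section LinAlg2

variable (G : SimpleGraph V) [DecidableRel G.Adj]

lemma dlt_mem_orth {u v : V} (h : G.Reachable u v) :
    dltE u v ∈ (LinearMap.ker (TT G))ᗮ := by
  rw [Submodule.mem_orthogonal]
  intro y hy
  rw [mem_ker_TT] at hy
  have : (inner ℝ y (dltE u v) : ℝ) = y u - y v := by
    rw [PiLp.inner_apply]
    have : ∀ a, (inner ℝ (y a) (dltE u v a) : ℝ) =
        (if a = u then y a else 0) - (if a = v then y a else 0) := by
      intro a
      rw [RCLike.inner_apply, starRingEnd_apply, star_trivial, dltE_apply]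
      unfold dlt
      split_ifs <;> ring
    rw [Finset.sum_congr rfl (fun a _ => this a), Finset.sum_sub_distrib]
    simp
  rw [this, hy u v h, sub_self]

/-- existence of a potential in the orthogonal complement of the kernel -/
lemma exists_pot {u v : V} (h : G.Reachable u v) :
    ∃ φ : EuclideanSpace ℝ V, TT G φ = dltE u v ∧
      φ ∈ (LinearMap.ker (TT G))ᗮ := by
  have hmem : dltE u v ∈ LinearMap.range (TT G) := by
    rw [range_TT]; exact dlt_mem_orth G h
  obtain ⟨ψ, hψ⟩ := hmem
  set K := LinearMap.ker (TT G)
  refine ⟨ψ - (K.orthogonalProjection ψ : EuclideanSpace ℝ V), ?_, ?_⟩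
  · rw [map_sub, hψ]
    have : TT G (K.orthogonalProjection ψ : EuclideanSpace ℝ V) = 0 :=
      (K.orthogonalProjection ψ).2
    rw [this, sub_zero]
  · exact by exact Submodule.sub_starProjection_mem_orthogonal (K := K) ψ

lemma pot_unique {x : EuclideanSpace ℝ V} {φ ψ : EuclideanSpace ℝ V}
    (hφ : TT G φ = x) (hψ : TT G ψ = x)
    (hφm : φ ∈ (LinearMap.ker (TT G))ᗮ) (hψm : ψ ∈ (LinearMap.ker (TT G))ᗮ) : φ = ψ := by
  have h1 : φ - ψ ∈ LinearMap.ker (TT G) := by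
    rw [LinearMap.mem_ker, map_sub, hφ, hψ, sub_self]
  have h2 : φ - ψ ∈ (LinearMap.ker (TT G))ᗮ := Submodule.sub_mem _ hφm hψm
  have := Submodule.inner_left_of_mem_orthogonal h1 h2
  rw [inner_self_eq_zero] at this
  exact sub_eq_zero.1 this

end LinAlg2

section Pot

variable (G : SimpleGraph V) [DecidableRel G.Adj]

lemma inner_eval (x y : EuclideanSpace ℝ V) : (inner ℝ x y : ℝ) = ∑ i, x i * y i := by
  rw [PiLp.inner_apply]
  apply Finset.sum_congr rfl
  intro i _
  rw [RCLike.inner_apply, starRingEnd_apply, star_trivial, mul_comm]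

lemma inner_dltE (x : EuclideanSpace ℝ V) (a b : V) :
    (inner ℝ x (dltE a b) : ℝ) = x a - x b := by
  rw [inner_eval]
  have h1 : ∀ c, x c * dltE a b c = (if c = a then x c else 0) - (if c = b then x c else 0) := by
    intro c
    show x c * dlt a b c = _
    unfold dlt
    split_ifs <;> ring
  rw [Finset.sum_congr rfl (fun c _ => h1 c), Finset.sum_sub_distrib]
  simp

/-- canonical potential -/
def pot (u v : V) : EuclideanSpace ℝ V :=
  if h : G.Reachable u v then (exists_pot G h).choose else 0

lemma pot_lin {u v : V} (h : G.Reachable u v) : TT G (pot G u v) = dltE u v := by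
  rw [pot, dif_pos h]
  exact (exists_pot G h).choose_spec.1

lemma pot_orth (u v : V) : pot G u v ∈ (LinearMap.ker (TT G))ᗮ := by
  rw [pot]
  split_ifs with h
  · exact (exists_pot G h).choose_spec.2
  · exact Submodule.zero_mem _

lemma dltE_add (a b c : V) : dltE a b + dltE b c = dltE a c := by
  ext w
  show dlt a b w + dlt b c w = dlt a c w
  unfold dlt
  split_ifs <;> ring

lemma pot_add {a b c : V} (hab : G.Reachable a b) (hbc : G.Reachable b c) :
    pot G a c = pot G a b + pot G b c := by
  refine pot_unique G (pot_lin G (hab.trans hbc)) ?_ (pot_orth G a c)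
    (Submodule.add_mem _ (pot_orth G a b) (pot_orth G b c))
  rw [map_add, pot_lin G hab, pot_lin G hbc, dltE_add]

/-- the bilinear pairing F -/
def FF (u v a b : V) : ℝ := inner ℝ (pot G u v) (dltE a b)

/-- resistance value -/
def rVal (u v : V) : ℝ := FF G u v u v

lemma FF_symm {u v a b : V} (h1 : G.Reachable u v) (h2 : G.Reachable a b) :
    FF G u v a b = FF G a b u v := by
  unfold FF
  rw [← pot_lin G h2, ← TT_symm G (pot G u v) (pot G a b), ← pot_lin G h1,
    real_inner_comm]

lemma energy_stdFlow_eq {φ : V → ℝ} {u v : V}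
    (hφ : Matrix.toLin' (G.lapMatrix ℝ) φ = dlt u v) :
    energy (stdFlow G φ) = φ u - φ v := by
  rw [energy_stdFlow]
  have h1 : ∀ a, φ a * Matrix.toLin' (G.lapMatrix ℝ) φ a =
      (if a = u then φ a else 0) - (if a = v then φ a else 0) := by
    intro a
    rw [hφ]
    unfold dlt
    split_ifs <;> ring
  rw [Finset.sum_congr rfl (fun a _ => h1 a), Finset.sum_sub_distrib]
  simp

lemma pot_toLin' {u v : V} (h : G.Reachable u v) :
    Matrix.toLin' (G.lapMatrix ℝ) (pot G u v) = dlt u v :=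
  funext fun a => congrArg (fun z : EuclideanSpace ℝ V => z a) (pot_lin G h)

lemma effRes_of_reachable {u v : V} (h : G.Reachable u v) :
    effRes G u v = ENNReal.ofReal (rVal G u v) := by
  rw [effRes_eq_of_pot G (pot_toLin' G h)]
  unfold rVal FF
  rw [inner_dltE]

lemma rVal_nonneg {u v : V} (h : G.Reachable u v) : 0 ≤ rVal G u v := by
  have h1 := energy_stdFlow_eq G (pot_toLin' G h)
  have h2 := energy_nonneg (stdFlow G (pot G u v))
  unfold rVal FF
  rw [inner_dltE]
  linarith

lemma key1 {a b d : V} (hab : G.Reachable a b) (hbd : G.Reachable b d) :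
    rVal G a d = rVal G a b + rVal G b d + 2 * FF G a b b d := by
  unfold rVal
  have h1 : FF G a d a d = inner ℝ (pot G a b + pot G b d) (dltE a b + dltE b d) := by
    unfold FF
    rw [pot_add G hab hbd, dltE_add]
  rw [h1, inner_add_right, inner_add_left, inner_add_left]
  have hfs : (inner ℝ (pot G b d) (dltE a b) : ℝ) = FF G a b b d := FF_symm G hbd hab
  unfold FF at *
  linarith

lemma FF_formula {u v u' v' : V} (huv : G.Reachable u v) (huv' : G.Reachable u' v')
    (huu' : G.Reachable u u') :
    FF G u v u' v' = (rVal G u v' + rVal G v u' - rVal G u u' - rVal G v v') / 2 := by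
  have hvu' : G.Reachable v u' := huv.symm.trans huu'
  have hvv' : G.Reachable v v' := hvu'.trans huv'
  have huvp : G.Reachable u v' := huv.trans hvv'
  have hsplit : FF G u v u' v' = FF G u v u' v + FF G u v v v' := by
    unfold FF
    rw [← inner_add_right, dltE_add]
  have hneg : FF G u v u' v = - FF G u v v u' := by
    unfold FF
    have : dltE u' v = -dltE v u' := by
      ext w
      show dlt u' v w = - dlt v u' w
      unfold dlt; split_ifs <;> ring
    rw [this, inner_neg_right]
  have e1 := key1 G huv hvv'   -- rVal u v' = rVal u v + rVal v v' + 2 FF u v v v'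
  have e2 := key1 G huv hvu'   -- rVal u u' = rVal u v + rVal v u' + 2 FF u v v u'
  rw [hsplit, hneg]
  linarith

lemma pot_support {u v a : V} (h : G.Reachable u v) (ha : ¬ G.Reachable u a) :
    pot G u v a = 0 := by
  set ψ := pot G u v with hψdef
  set ψ' : EuclideanSpace ℝ V :=
    (WithLp.equiv 2 (V → ℝ)).symm (fun c => if G.Reachable u c then ψ c else 0) with hψ'
  have hψ'app : ∀ c, ψ' c = if G.Reachable u c then ψ c else 0 := fun c => rfl
  have hlin : TT G ψ' = dltE u v := by
    ext c
    show Matrix.toLin' (G.lapMatrix ℝ) ψ' c = dlt u v c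
    rw [lapL_apply]
    by_cases hc : G.Reachable u c
    · have : ∀ b, (if G.Adj c b then ψ' c - ψ' b else 0) =
          (if G.Adj c b then ψ c - ψ b else 0) := by
        intro b
        by_cases hadj : G.Adj c b
        · rw [if_pos hadj, if_pos hadj, hψ'app, hψ'app, if_pos hc,
            if_pos (hc.trans hadj.reachable)]
        · rw [if_neg hadj, if_neg hadj]
      rw [Finset.sum_congr rfl (fun b _ => this b), ← lapL_apply, ← TT_apply]
      rw [pot_lin G h]
      rfl
    · have : ∀ b, (if G.Adj c b then ψ' c - ψ' b else 0) = 0 := by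
        intro b
        by_cases hadj : G.Adj c b
        · have hb : ¬ G.Reachable u b := fun hb => hc (hb.trans hadj.symm.reachable)
          rw [if_pos hadj, hψ'app, hψ'app, if_neg hc, if_neg hb, sub_zero]
        · rw [if_neg hadj]
      rw [Finset.sum_congr rfl (fun b _ => this b), Finset.sum_const_zero]
      have hcu : c ≠ u := fun hh => hc (by rw [hh])
      have hcv : c ≠ v := fun hh => hc (by rw [hh]; exact h)
      unfold dlt
      rw [if_neg hcu, if_neg hcv, sub_zero]
  have horth : ψ' ∈ (LinearMap.ker (TT G))ᗮ := by
    rw [Submodule.mem_orthogonal]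
    intro y hy
    set y' : EuclideanSpace ℝ V :=
      (WithLp.equiv 2 (V → ℝ)).symm (fun c => if G.Reachable u c then y c else 0) with hy'
    have hy'mem : y' ∈ LinearMap.ker (TT G) := by
      rw [mem_ker_TT]
      intro i j hij
      show (if G.Reachable u i then y i else 0) = (if G.Reachable u j then y j else 0)
      by_cases hi : G.Reachable u i
      · rw [if_pos hi, if_pos (hi.trans hij), (mem_ker_TT G y).1 hy i j hij]
      · rw [if_neg hi, if_neg (fun hj => hi (hj.trans hij.symm))]
    have : (inner ℝ y ψ' : ℝ) = (inner ℝ y' ψ : ℝ) := by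
      rw [inner_eval, inner_eval]
      congr 1; ext c
      show y c * (if G.Reachable u c then ψ c else 0) =
        (if G.Reachable u c then y c else 0) * ψ c
      split_ifs <;> ring
    rw [this]
    exact (Submodule.mem_orthogonal _ ψ).1 (pot_orth G u v) y' hy'mem
  have heq := pot_unique G (pot_lin G h) hlin (pot_orth G u v) horth
  show pot G u v a = 0
  rw [heq, hψ'app, if_neg ha]

end Pot

section Basics

variable (G : SimpleGraph V)

lemma effRes_self (u : V) : effRes G u u = 0 := by
  have hmem : (0:ℝ≥0∞) ∈ {x : ℝ≥0∞ | ∃ f, IsUnitFlow G u u f ∧ x = ENNReal.ofReal (energy f)} := by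
    refine ⟨fun _ _ => 0, ⟨fun a b => by ring, fun a b _ => rfl, fun w => by simp⟩, ?_⟩
    unfold energy
    simp
  exact le_antisymm (sInf_le hmem) zero_le

lemma flow_rev {u v : V} {f : V → V → ℝ} (hf : IsUnitFlow G u v f) :
    IsUnitFlow G v u (fun a b => f b a) := by
  obtain ⟨hanti, hsupp, hdiv⟩ := hf
  refine ⟨fun a b => hanti b a, fun a b hab => hsupp b a (fun hc => hab hc.symm), fun w => ?_⟩
  have : ∀ x, f x w = - f w x := fun x => hanti x w
  simp_rw [this]
  rw [Finset.sum_neg_distrib, hdiv w]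
  ring

lemma energy_rev (f : V → V → ℝ) : energy (fun a b => f b a) = energy f := by
  unfold energy
  rw [Finset.sum_comm]

lemma effRes_symm (u v : V) : effRes G u v = effRes G v u := by
  unfold effRes
  congr 1
  ext x
  constructor
  · rintro ⟨f, hf, rfl⟩
    exact ⟨fun a b => f b a, flow_rev G hf, by rw [energy_rev]⟩
  · rintro ⟨f, hf, rfl⟩
    exact ⟨fun a b => f b a, flow_rev G hf, by rw [energy_rev]⟩

lemma effRes_top {u v : V} (h : ¬ G.Reachable u v) : effRes G u v = ⊤ := by
  have hempty : {x : ℝ≥0∞ | ∃ f, IsUnitFlow G u v f ∧ x = ENNReal.ofReal (energy f)} = ∅ := by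
    ext x
    simp only [Set.mem_setOf_eq, Set.mem_empty_iff_false, iff_false]
    rintro ⟨f, ⟨hanti, hsupp, hdiv⟩, rfl⟩
    classical
    set C : Finset V := Finset.univ.filter (fun a => G.Reachable u a) with hC
    have huC : u ∈ C := by simp [hC]
    have hvC : v ∉ C := by simp [hC, h]
    have hS1 : ∑ a ∈ C, ∑ b, f a b = 1 := by
      have : ∀ a ∈ C, ∑ b, f a b = if a = u then (1:ℝ) else 0 := by
        intro a haC
        rw [hdiv a]
        have hav : a ≠ v := fun hh => hvC (hh ▸ haC)
        rw [if_neg hav, sub_zero]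
        split_ifs <;> rfl
      rw [Finset.sum_congr rfl this, Finset.sum_ite_eq' C u (fun _ => (1:ℝ)), if_pos huC]
    have hS2 : ∑ a ∈ C, ∑ b, f a b = ∑ a ∈ C, ∑ b ∈ C, f a b := by
      apply Finset.sum_congr rfl
      intro a haC
      symm
      apply Finset.sum_subset (Finset.subset_univ C)
      intro b _ hbC
      apply hsupp
      intro hadj
      apply hbC
      simp only [hC, Finset.mem_filter, Finset.mem_univ, true_and] at haC ⊢
      exact haC.trans hadj.reachable
    have hS3 : ∑ a ∈ C, ∑ b ∈ C, f a b = 0 := by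
      have : ∑ a ∈ C, ∑ b ∈ C, f a b = - ∑ a ∈ C, ∑ b ∈ C, f a b := by
        nth_rewrite 1 [Finset.sum_comm]
        rw [← Finset.sum_neg_distrib]
        apply Finset.sum_congr rfl
        intro b _
        rw [← Finset.sum_neg_distrib]
        apply Finset.sum_congr rfl
        intro a _
        rw [hanti a b]
      linarith
    rw [hS2, hS3] at hS1
    norm_num at hS1
  rw [effRes, hempty, sInf_empty]

lemma effRes_ne_top {u v : V} (h : G.Reachable u v) : effRes G u v ≠ ⊤ := by
  classical
  rw [effRes_of_reachable G h]
  exact ENNReal.ofReal_ne_top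

lemma effRes_top_iff (u v : V) : effRes G u v = ⊤ ↔ ¬ G.Reachable u v := by
  constructor
  · intro hh hr
    exact effRes_ne_top G hr hh
  · exact effRes_top G

end Basics

section Recon

variable (G₁ G₂ : SimpleGraph V) [DecidableRel G₁.Adj] [DecidableRel G₂.Adj]

theorem eq_of_effRes_eq (h : ∀ u v, effRes G₁ u v = effRes G₂ u v) : G₁ = G₂ := by
  have hreach : ∀ u v, G₁.Reachable u v ↔ G₂.Reachable u v := by
    intro u v
    rw [← not_iff_not, ← effRes_top_iff, ← effRes_top_iff, h u v]
  have hker : LinearMap.ker (TT G₁) = LinearMap.ker (TT G₂) := by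
    ext x
    rw [mem_ker_TT, mem_ker_TT]
    constructor
    · intro hh i j hr
      exact hh i j ((hreach i j).2 hr)
    · intro hh i j hr
      exact hh i j ((hreach i j).1 hr)
  have hrVal : ∀ u v, G₁.Reachable u v → rVal G₁ u v = rVal G₂ u v := by
    intro u v h1
    have h2 := (hreach u v).1 h1
    have := h u v
    rw [effRes_of_reachable G₁ h1, effRes_of_reachable G₂ h2] at this
    exact (ENNReal.ofReal_eq_ofReal_iff (rVal_nonneg G₁ h1) (rVal_nonneg G₂ h2)).1 this
  have hpot : ∀ u v, G₁.Reachable u v → pot G₁ u v = pot G₂ u v := by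
    intro u v huv
    have huv2 := (hreach u v).1 huv
    set d : EuclideanSpace ℝ V := pot G₁ u v - pot G₂ u v with hd
    have hdorth : d ∈ (LinearMap.ker (TT G₁))ᗮ := by
      apply Submodule.sub_mem _ (pot_orth G₁ u v)
      rw [hker]
      exact pot_orth G₂ u v
    have hdval : ∀ i j, G₁.Reachable i j → (inner ℝ d (dltE i j) : ℝ) = 0 := by
      intro i j hij
      have hij2 := (hreach i j).1 hij
      have hsplit : (inner ℝ d (dltE i j) : ℝ) = FF G₁ u v i j - FF G₂ u v i j := by
        rw [hd, inner_sub_left]; rfl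
      rw [hsplit]
      by_cases hc : G₁.Reachable u i
      · have hc2 := (hreach u i).1 hc
        rw [FF_formula G₁ huv hij hc, FF_formula G₂ huv2 hij2 hc2]
        have e1 := hrVal u j (hc.trans hij)
        have e2 := hrVal v i ((huv.symm.trans hc))
        have e3 := hrVal u i hc
        have e4 := hrVal v j ((huv.symm.trans hc).trans hij)
        rw [e1, e2, e3, e4]
        ring
      · have hcj : ¬ G₁.Reachable u j := fun hh => hc (hh.trans hij.symm)
        unfold FF
        rw [inner_dltE, inner_dltE,
          pot_support G₁ huv hc, pot_support G₁ huv hcj,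
          pot_support G₂ huv2 (fun hh => hc ((hreach u i).2 hh)),
          pot_support G₂ huv2 (fun hh => hcj ((hreach u j).2 hh))]
        ring
    have hdker : d ∈ LinearMap.ker (TT G₁) := by
      rw [mem_ker_TT]
      intro i j hr
      have := hdval i j hr
      rw [inner_dltE] at this
      linarith
    have : (inner ℝ d d : ℝ) = 0 := (Submodule.mem_orthogonal _ d).1 hdorth d hdker
    rw [inner_self_eq_zero] at this
    exact sub_eq_zero.1 this
  have hTT : TT G₁ = TT G₂ := by
    apply LinearMap.ext
    intro x
    set y : EuclideanSpace ℝ V := TT G₁ x - TT G₂ x with hy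
    have hyorth : y ∈ (LinearMap.ker (TT G₁))ᗮ := by
      apply Submodule.sub_mem
      · rw [← range_TT]; exact ⟨x, rfl⟩
      · rw [hker, ← range_TT]; exact ⟨x, rfl⟩
    have hyrange : y ∈ LinearMap.range (TT G₁) := by
      rw [range_TT]; exact hyorth
    obtain ⟨x₀, hx₀⟩ := hyrange
    set K := LinearMap.ker (TT G₁)
    set w : EuclideanSpace ℝ V := x₀ - (K.orthogonalProjection x₀ : EuclideanSpace ℝ V) with hw
    have hworth : w ∈ Kᗮ := by exact Submodule.sub_starProjection_mem_orthogonal (K := K) x₀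
    have hTw : TT G₁ w = y := by
      rw [hw, map_sub, hx₀]
      have : TT G₁ (K.orthogonalProjection x₀ : EuclideanSpace ℝ V) = 0 :=
        (K.orthogonalProjection x₀).2
      rw [this, sub_zero]
    have hyval : ∀ i j, G₁.Reachable i j → (inner ℝ y (pot G₁ i j) : ℝ) = 0 := by
      intro i j hij
      have hij2 := (hreach i j).1 hij
      have h1 : (inner ℝ (TT G₁ x) (pot G₁ i j) : ℝ) = inner ℝ x (dltE i j) := by
        rw [TT_symm G₁ x (pot G₁ i j), pot_lin G₁ hij]
      have h2 : (inner ℝ (TT G₂ x) (pot G₁ i j) : ℝ) = inner ℝ x (dltE i j) := by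
        rw [hpot i j hij, TT_symm G₂ x (pot G₂ i j), pot_lin G₂ hij2]
      rw [hy, inner_sub_left, h1, h2, sub_self]
    have hwker : w ∈ K := by
      rw [mem_ker_TT]
      intro i j hr
      have h3 : (inner ℝ w (dltE i j) : ℝ) = 0 := by
        rw [← pot_lin G₁ hr, ← TT_symm G₁ w (pot G₁ i j), hTw]
        exact hyval i j hr
      rw [inner_dltE] at h3
      linarith
    have : (inner ℝ w w : ℝ) = 0 := (Submodule.mem_orthogonal _ w).1 hworth w hwker
    rw [inner_self_eq_zero] at this
    rw [this, map_zero] at hTw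
    exact sub_eq_zero.1 hTw.symm
  have hmat : G₁.lapMatrix ℝ = G₂.lapMatrix ℝ := Matrix.toEuclideanLin.injective hTT
  ext a b
  by_cases hab : a = b
  · subst hab
    simp
  · have := congrFun (congrFun hmat a) b
    simp only [SimpleGraph.lapMatrix, Matrix.sub_apply, SimpleGraph.degMatrix,
      Matrix.diagonal_apply_ne _ hab, SimpleGraph.adjMatrix_apply] at this
    constructor
    · intro h1
      by_contra h2
      rw [if_pos h1, if_neg h2] at this
      norm_num at this
    · intro h1
      by_contra h2
      rw [if_neg h2, if_pos h1] at this
      norm_num at this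

end Recon

section Wrap

lemma renRes_lt_one (G : SimpleGraph V) {u v : V} (h : effRes G u v ≠ ⊤) :
    renRes G u v < 1 := by
  rw [renRes, if_neg h]
  have h0 : (0:ℝ) ≤ (effRes G u v).toReal := ENNReal.toReal_nonneg
  rw [div_lt_one (by linarith)]
  linarith

lemma effRes_eq_of_renRes_eq (G₁ G₂ : SimpleGraph V) {u v : V}
    (h : renRes G₁ u v = renRes G₂ u v) : effRes G₁ u v = effRes G₂ u v := by
  by_cases h1 : effRes G₁ u v = ⊤ <;> by_cases h2 : effRes G₂ u v = ⊤
  · rw [h1, h2]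
  · exfalso
    simp only [renRes, if_pos h1, if_neg h2] at h
    have := renRes_lt_one G₂ h2
    rw [renRes, if_neg h2] at this
    rw [← h] at this
    exact lt_irrefl _ this
  · exfalso
    simp only [renRes, if_neg h1, if_pos h2] at h
    have := renRes_lt_one G₁ h1
    rw [renRes, if_neg h1] at this
    rw [h] at this
    exact lt_irrefl _ this
  · simp only [renRes, if_neg h1, if_neg h2] at h
    set a := (effRes G₁ u v).toReal with ha
    set b := (effRes G₂ u v).toReal with hb
    have ha0 : (0:ℝ) ≤ a := ENNReal.toReal_nonneg
    have hb0 : (0:ℝ) ≤ b := ENNReal.toReal_nonneg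
    have hab : a = b := by
      field_simp at h
      linarith
    exact (ENNReal.toReal_eq_toReal_iff' h1 h2).1 hab

end Wrap



/-- `RD` is a metric on the simple graphs over a fixed finite vertex set `V`. -/
theorem RD_is_metric {V : Type*} [Fintype V] [LinearOrder V]
    (G₁ G₂ G₃ : SimpleGraph V) :
    0 ≤ RD G₁ G₂ ∧
    (RD G₁ G₂ = 0 ↔ G₁ = G₂) ∧
    RD G₁ G₂ = RD G₂ G₁ ∧
    RD G₁ G₃ ≤ RD G₁ G₂ + RD G₂ G₃ := by
  classical
  refine ⟨?_, ⟨?_, ?_⟩, ?_, ?_⟩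
  · exact Finset.sum_nonneg fun p _ => abs_nonneg _
  · intro h0
    have hterm := (Finset.sum_eq_zero_iff_of_nonneg
      (fun p _ => abs_nonneg (renRes G₁ p.1 p.2 - renRes G₂ p.1 p.2))).1 h0
    have hren : ∀ u v : V, u < v → renRes G₁ u v = renRes G₂ u v := by
      intro u v hlt
      have hmem : ((u, v) : V × V) ∈
          (Finset.univ ×ˢ Finset.univ).filter (fun p : V × V => p.1 < p.2) := by
        simp [hlt]
      have := hterm (u, v) hmem
      rwa [abs_eq_zero, sub_eq_zero] at this
    have heff : ∀ u v, effRes G₁ u v = effRes G₂ u v := by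
      intro u v
      rcases lt_trichotomy u v with h | h | h
      · exact effRes_eq_of_renRes_eq G₁ G₂ (hren u v h)
      · subst h
        rw [effRes_self, effRes_self]
      · rw [effRes_symm, effRes_symm G₂]
        exact effRes_eq_of_renRes_eq G₁ G₂ (hren v u h)
    exact eq_of_effRes_eq G₁ G₂ heff
  · rintro rfl
    unfold RD RDon
    simp
  · unfold RD RDon
    apply Finset.sum_congr rfl
    intro p _
    rw [abs_sub_comm]
  · unfold RD RDon
    rw [← Finset.sum_add_distrib]
    apply Finset.sum_le_sum
    intro p _
    exact abs_sub_le _ _ _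

end RP
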